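/- arXiv:0707.1355 — 2 statements merged into one kernel-verified Lean document; each statement's English description precedes it below -/
import Mathlib

section
/- For every k ≥ 1, every k×k unitary matrix u, and every k×k selfadjoint complex matrix y, |u exp(2πi y) u* − exp(2πi y)|_2 ≤ 2π |u y u* − y|_2, where |c|_2 = (tr_k(c* c))^{1/2} is the normalized Hilbert–Schmidt norm and exp denotes the matrix exponential. Equivalently, |u exp(2πi y) − exp(2πi y) u|_2 ≤ 2π |u y − y u|_2. -/
open Matrix Filter MeasureTheory
open scoped Matrix ENNReal

noncomputable section

instance (k : ℕ) : MeasurableSpace (Matrix (Fin k) (Fin k) ℂ) :=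
  inferInstanceAs (MeasurableSpace ((Fin k) → (Fin k) → ℂ))

/-- the normalized Hilbert–Schmidt norm `|A|₂ = (tr_k(A* A))^(1/2)` -/
def hsNorm (k : ℕ) (A : Matrix (Fin k) (Fin k) ℂ) : ℝ :=
  Real.sqrt (((Aᴴ * A).trace).re / k)

/-- the operator norm of a `k × k` complex matrix (acting on `ℓ²(Fin k)`) -/
def matOpNorm {k : ℕ} (A : Matrix (Fin k) (Fin k) ℂ) : ℝ :=
  ‖Matrix.toEuclideanCLM (𝕜 := ℂ) A‖

/-- covering number of `S` by open `ε`-balls in the normalized Hilbert–Schmidt norm -/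
def covHS (k : ℕ) (S : Set (Matrix (Fin k) (Fin k) ℂ)) (ε : ℝ) : ℝ≥0∞ :=
  sInf ((fun t : Finset (Matrix (Fin k) (Fin k) ℂ) => (t.card : ℝ≥0∞)) ''
    {t | S ⊆ ⋃ c ∈ t, {x | hsNorm k (x - c) < ε}})

/-- covering number of `S` by open `ε`-balls in the operator norm -/
def covOp (k : ℕ) (S : Set (Matrix (Fin k) (Fin k) ℂ)) (ε : ℝ) : ℝ≥0∞ :=
  sInf ((fun t : Finset (Matrix (Fin k) (Fin k) ℂ) => (t.card : ℝ≥0∞)) ''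
    {t | S ⊆ ⋃ c ∈ t, {x | matOpNorm (x - c) < ε}})

/-- `y_k`: the diagonal `k × k` matrix with entries `0, 1/k, …, (k-1)/k`. -/
def yMat (k : ℕ) : Matrix (Fin k) (Fin k) ℂ :=
  Matrix.diagonal fun i => (((i : ℕ) : ℂ) / k)

/-- the free entropy `χ(y)` of a selfadjoint element whose distribution is Lebesgue measure
on `[0,1]`: `∫₀¹∫₀¹ log |s-t| ds dt + 3/4 + (1/2) log (2π)` -/
def chiUnif : ℝ :=
  (∫ s in (0:ℝ)..1, ∫ t in (0:ℝ)..1, Real.log |s - t|) + 3/4 + (1/2) * Real.log (2 * Real.pi)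

lemma hsNorm_mul_right (k : ℕ) (A v : Matrix (Fin k) (Fin k) ℂ)
    (hv : v * star v = 1) : hsNorm k (A * v) = hsNorm k A := by
  rw [Matrix.star_eq_conjTranspose] at hv
  unfold hsNorm
  congr 2
  rw [Matrix.conjTranspose_mul, show vᴴ * Aᴴ * (A * v) = vᴴ * (Aᴴ * A) * v by
      simp [mul_assoc], Matrix.trace_mul_comm (vᴴ * (Aᴴ * A)) v,
    show v * (vᴴ * (Aᴴ * A)) = v * vᴴ * (Aᴴ * A) by simp [mul_assoc], hv, one_mul]

lemma hsNorm_mul_left (k : ℕ) (A v : Matrix (Fin k) (Fin k) ℂ)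
    (hv : star v * v = 1) : hsNorm k (v * A) = hsNorm k A := by
  rw [Matrix.star_eq_conjTranspose] at hv
  unfold hsNorm
  congr 2
  rw [Matrix.conjTranspose_mul, show Aᴴ * vᴴ * (v * A) = Aᴴ * (vᴴ * v) * A by
      simp [mul_assoc], hv, mul_one]

lemma cexp_one_lip (θ : ℝ) :
    ‖Complex.exp ((θ:ℂ) * Complex.I) - 1‖ ≤ |θ| := by
  have h2 : Complex.exp ((θ:ℂ) * Complex.I) - 1
      = Complex.mk (Real.cos θ - 1) (Real.sin θ) := by
    rw [Complex.exp_mul_I]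
    apply Complex.ext <;> simp [Complex.cos_ofReal_re, Complex.sin_ofReal_re]
  rw [h2, Complex.norm_def, Complex.normSq_mk]
  rw [show (Real.cos θ - 1) * (Real.cos θ - 1) + Real.sin θ * Real.sin θ
      = 2 - 2 * Real.cos θ by
    have := Real.sin_sq_add_cos_sq θ; nlinarith]
  have hc : 1 - θ ^ 2 / 2 ≤ Real.cos θ := Real.one_sub_sq_div_two_le_cos
  calc Real.sqrt (2 - 2 * Real.cos θ) ≤ Real.sqrt (θ ^ 2) :=
        Real.sqrt_le_sqrt (by linarith)
    _ = |θ| := Real.sqrt_sq_eq_abs θ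

lemma cexp_lip (s t : ℝ) :
    ‖Complex.exp ((s:ℂ) * Complex.I) - Complex.exp ((t:ℂ) * Complex.I)‖ ≤ |s - t| := by
  have h : Complex.exp ((s:ℂ) * Complex.I) - Complex.exp ((t:ℂ) * Complex.I)
      = Complex.exp ((t:ℂ) * Complex.I) * (Complex.exp (((s - t : ℝ):ℂ) * Complex.I) - 1) := by
    rw [mul_sub, mul_one, ← Complex.exp_add]
    push_cast
    ring_nf
  rw [h, norm_mul, Complex.norm_exp_ofReal_mul_I, one_mul]
  exact cexp_one_lip (s - t)

lemma hsNorm_eq' (k : ℕ) (A : Matrix (Fin k) (Fin k) ℂ) :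
    hsNorm k A = Real.sqrt ((∑ i, ∑ j, Complex.normSq (A i j)) / k) := by
  rw [hsNorm]
  congr 2
  rw [Matrix.trace]
  simp only [Matrix.diag, Matrix.mul_apply, Matrix.conjTranspose_apply]
  rw [Complex.re_sum, Finset.sum_comm]
  congr 1; ext i; rw [Complex.re_sum]
  congr 1; ext j
  rw [show star (A j i) = (starRingEnd ℂ) (A j i) from rfl, ← Complex.normSq_eq_conj_mul_self]
  simp

lemma diag_lemma (k : ℕ) (hk : 1 ≤ k) (w : Matrix (Fin k) (Fin k) ℂ) (lam : Fin k → ℝ) :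
    hsNorm k (w * Matrix.diagonal (fun j => Complex.exp (((2 * Real.pi * lam j : ℝ) : ℂ) * Complex.I))
      - Matrix.diagonal (fun j => Complex.exp (((2 * Real.pi * lam j : ℝ) : ℂ) * Complex.I)) * w)
    ≤ 2 * Real.pi * hsNorm k (w * Matrix.diagonal (fun j => ((lam j : ℝ) : ℂ))
      - Matrix.diagonal (fun j => ((lam j : ℝ) : ℂ)) * w) := by
  set f : Fin k → ℂ := fun j => Complex.exp (((2 * Real.pi * lam j : ℝ) : ℂ) * Complex.I) with hf
  set g : Fin k → ℂ := fun j => ((lam j : ℝ) : ℂ) with hg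
  rw [hsNorm_eq', hsNorm_eq']
  have key : ∀ i j, Complex.normSq ((w * Matrix.diagonal f - Matrix.diagonal f * w) i j)
      ≤ (2 * Real.pi) ^ 2 *
        Complex.normSq ((w * Matrix.diagonal g - Matrix.diagonal g * w) i j) := by
    intro i j
    simp only [Matrix.sub_apply, Matrix.mul_diagonal, Matrix.diagonal_mul]
    rw [show w i j * f j - f i * w i j = w i j * (f j - f i) by ring,
      show w i j * g j - g i * w i j = w i j * (g j - g i) by ring,
      Complex.normSq_mul, Complex.normSq_mul, ← mul_assoc,
      mul_comm ((2 * Real.pi) ^ 2) (Complex.normSq (w i j)), mul_assoc]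
    apply mul_le_mul_of_nonneg_left _ (Complex.normSq_nonneg _)
    rw [← Complex.sq_norm, ← Complex.sq_norm]
    have habs : ‖f j - f i‖ ≤ 2 * Real.pi * ‖g j - g i‖ := by
      have h1 := cexp_lip (2 * Real.pi * lam j) (2 * Real.pi * lam i)
      have h2 : ‖g j - g i‖ = |lam j - lam i| := by
        rw [hg]; push_cast
        rw [← Complex.ofReal_sub, Complex.norm_real, Real.norm_eq_abs]
      rw [h2, hf]
      calc ‖Complex.exp (((2 * Real.pi * lam j : ℝ) : ℂ) * Complex.I)
            - Complex.exp (((2 * Real.pi * lam i : ℝ) : ℂ) * Complex.I)‖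
          ≤ |2 * Real.pi * lam j - 2 * Real.pi * lam i| := h1
        _ = 2 * Real.pi * |lam j - lam i| := by
            rw [show 2 * Real.pi * lam j - 2 * Real.pi * lam i
              = (2 * Real.pi) * (lam j - lam i) by ring, abs_mul,
              abs_of_nonneg (by positivity : (0:ℝ) ≤ 2 * Real.pi)]
    calc ‖f j - f i‖ ^ 2 ≤ (2 * Real.pi * ‖g j - g i‖) ^ 2 := by
          apply sq_le_sq' _ habs
          have := norm_nonneg (f j - f i)
          nlinarith [norm_nonneg (g j - g i), Real.pi_pos]
      _ = (2 * Real.pi) ^ 2 * ‖g j - g i‖ ^ 2 := by ring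
  have hsum : (∑ i, ∑ j, Complex.normSq ((w * Matrix.diagonal f - Matrix.diagonal f * w) i j))
      ≤ (2 * Real.pi) ^ 2 *
        ∑ i, ∑ j, Complex.normSq ((w * Matrix.diagonal g - Matrix.diagonal g * w) i j) := by
    rw [Finset.mul_sum]
    apply Finset.sum_le_sum
    intro i _
    rw [Finset.mul_sum]
    exact Finset.sum_le_sum fun j _ => key i j
  calc Real.sqrt ((∑ i, ∑ j, Complex.normSq ((w * Matrix.diagonal f - Matrix.diagonal f * w) i j)) / k)
      ≤ Real.sqrt ((2 * Real.pi) ^ 2 *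
        ((∑ i, ∑ j, Complex.normSq ((w * Matrix.diagonal g - Matrix.diagonal g * w) i j)) / k)) := by
        apply Real.sqrt_le_sqrt
        rw [← mul_div_assoc]
        exact div_le_div_of_nonneg_right hsum (by positivity)
    _ = 2 * Real.pi * Real.sqrt ((∑ i, ∑ j, Complex.normSq ((w * Matrix.diagonal g - Matrix.diagonal g * w) i j)) / k) := by
        rw [Real.sqrt_mul (sq_nonneg _), Real.sqrt_sq (by positivity)]

lemma conj_helper (k : ℕ) (V u B : Matrix (Fin k) (Fin k) ℂ)
    (h1 : star V * V = 1) (h2 : V * star V = 1) :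
    star V * (u * (V * B * star V) - (V * B * star V) * u) * V
      = (star V * u * V) * B - B * (star V * u * V) := by
  have h1' : ∀ X : Matrix (Fin k) (Fin k) ℂ, star V * (V * X) = X := fun X => by
    rw [← mul_assoc, h1, one_mul]
  have h2' : ∀ X : Matrix (Fin k) (Fin k) ℂ, V * (star V * X) = X := fun X => by
    rw [← mul_assoc, h2, one_mul]
  simp only [Matrix.mul_sub, Matrix.sub_mul, mul_assoc, h1', h2', h1, h2, mul_one, one_mul]

/-- For a unitary `u` and a selfadjoint matrix `y`,
`|u e^{2πiy} u* − e^{2πiy}|₂ ≤ 2π |u y u* − y|₂`, and equivalently with commutators. -/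
theorem hsNorm_exp_conj_le
    (k : ℕ) (hk : 1 ≤ k) (u y : Matrix (Fin k) (Fin k) ℂ)
    (hu : u ∈ Matrix.unitaryGroup (Fin k) ℂ) (hy : yᴴ = y) :
    hsNorm k (u * NormedSpace.exp ((((2 * Real.pi : ℝ) : ℂ) * Complex.I) • y) * star u
        - NormedSpace.exp ((((2 * Real.pi : ℝ) : ℂ) * Complex.I) • y))
      ≤ 2 * Real.pi * hsNorm k (u * y * star u - y) ∧
    hsNorm k (u * NormedSpace.exp ((((2 * Real.pi : ℝ) : ℂ) * Complex.I) • y)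
        - NormedSpace.exp ((((2 * Real.pi : ℝ) : ℂ) * Complex.I) • y) * u)
      ≤ 2 * Real.pi * hsNorm k (u * y - y * u) := by
  have hA : y.IsHermitian := hy
  set c : ℂ := (((2 * Real.pi : ℝ) : ℂ) * Complex.I) with hc
  set V : Matrix (Fin k) (Fin k) ℂ := (hA.eigenvectorUnitary : Matrix (Fin k) (Fin k) ℂ) with hV
  set lam : Fin k → ℝ := hA.eigenvalues with hlam
  set d : Matrix (Fin k) (Fin k) ℂ := Matrix.diagonal (fun j => ((lam j : ℝ) : ℂ)) with hd
  have hVmem : V ∈ Matrix.unitaryGroup (Fin k) ℂ := (hA.eigenvectorUnitary).2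
  have hV1 : star V * V = 1 := Matrix.mem_unitaryGroup_iff'.mp hVmem
  have hV2 : V * star V = 1 := Matrix.mem_unitaryGroup_iff.mp hVmem
  have hu1 : star u * u = 1 := Matrix.mem_unitaryGroup_iff'.mp hu
  have hu2 : u * star u = 1 := Matrix.mem_unitaryGroup_iff.mp hu
  have hspec : y = V * d * star V := by
    have := hA.spectral_theorem
    simp only [Unitary.conjStarAlgAut_apply] at this
    exact this
  have hVinv : V⁻¹ = star V := Matrix.inv_eq_left_inv hV1
  set E : Matrix (Fin k) (Fin k) ℂ :=
    Matrix.diagonal (fun j => Complex.exp (((2 * Real.pi * lam j : ℝ) : ℂ) * Complex.I)) with hE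
  have hexpd : NormedSpace.exp (c • d) = E := by
    have hcd : c • d = Matrix.diagonal (fun j => c * ((lam j : ℝ) : ℂ)) := by
      rw [hd, ← Matrix.diagonal_smul]
      congr 1
    rw [hcd, Matrix.exp_diagonal, Pi.exp_def, hE]
    refine congrArg Matrix.diagonal ?_
    funext j
    rw [← Complex.exp_eq_exp_ℂ]
    rw [hc]
    push_cast
    ring_nf
  have hsmul : c • y = V * (c • d) * star V := by
    rw [hspec, ← smul_mul_assoc, ← mul_smul_comm]
  have hexp : NormedSpace.exp (c • y) = V * E * star V := by
    rw [hsmul, ← hVinv, Matrix.exp_conj V (c • d) ((Matrix.isUnit_iff_isUnit_det V).mpr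
        (IsUnit.of_mul_eq_one _ (by rw [← Matrix.det_mul, hV2, Matrix.det_one]))),
      hVinv, hexpd]
  set w : Matrix (Fin k) (Fin k) ℂ := star V * u * V with hw
  have sandwich : ∀ B : Matrix (Fin k) (Fin k) ℂ,
      u * (V * B * star V) - (V * B * star V) * u = V * (w * B - B * w) * star V := by
    intro B
    have h1' : ∀ X : Matrix (Fin k) (Fin k) ℂ, star V * (V * X) = X := fun X => by
      rw [← mul_assoc, hV1, one_mul]
    have h2' : ∀ X : Matrix (Fin k) (Fin k) ℂ, V * (star V * X) = X := fun X => by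
      rw [← mul_assoc, hV2, one_mul]
    rw [hw]
    simp only [Matrix.mul_sub, Matrix.sub_mul, mul_assoc, h1', h2', hV1, hV2,
      mul_one, one_mul]
  have hinvVB : ∀ B : Matrix (Fin k) (Fin k) ℂ,
      hsNorm k (V * B * star V) = hsNorm k B := by
    intro B
    rw [hsNorm_mul_right k _ (star V) (by rw [star_star]; exact hV1),
      hsNorm_mul_left k _ V hV1]
  -- second inequality
  have part2 : hsNorm k (u * NormedSpace.exp (c • y) - NormedSpace.exp (c • y) * u)
      ≤ 2 * Real.pi * hsNorm k (u * y - y * u) := by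
    rw [hexp, sandwich E, hinvVB, show u * y - y * u = V * (w * d - d * w) * star V by
      rw [hspec]; exact sandwich d, hinvVB]
    exact diag_lemma k hk w lam
  refine ⟨?_, part2⟩
  have e1 : u * NormedSpace.exp (c • y) * star u - NormedSpace.exp (c • y)
      = (u * NormedSpace.exp (c • y) - NormedSpace.exp (c • y) * u) * star u := by
    rw [Matrix.sub_mul, mul_assoc, mul_assoc, hu2, mul_one]
  have e2 : u * y * star u - y = (u * y - y * u) * star u := by
    rw [Matrix.sub_mul, mul_assoc, mul_assoc, hu2, mul_one]
  rw [e1, e2, hsNorm_mul_right k _ (star u) (by rw [star_star]; exact hu1),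
    hsNorm_mul_right k _ (star u) (by rw [star_star]; exact hu1)]
  exact part2
end
end

section
/- Fix k ≥ 1 and let y_k be the k×k diagonal matrix with diagonal entries 0, 1/k, …, (k−1)/k, and let z_k = exp(2πi y_k) be the diagonal unitary whose diagonal entries are the k-th roots of unity. Then for every ε > 0 and every k×k unitary u with |u y_k − y_k u|_2 < ε², one has ‖u‖ ≤ 2 and |u z_k − z_k u|_2 < 7ε². That is, 𝓘(y_k, y_k, ε²) ⊂ Σ(z_k, z_k, 7ε²), where 𝓘(y_k, y_k, δ) = {u ∈ U_k : |u y_k − y_k u|_2 < δ} and Σ(z_k, z_k, δ) = {a ∈ M_k(ℂ) : ‖a‖ ≤ 2, |a z_k − z_k a|_2 < δ}. -/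
open Matrix Filter MeasureTheory
open scoped Matrix ENNReal

noncomputable section

/-- `z_k = e^{2πi y_k}`, the diagonal unitary whose entries are the `k`-th roots of unity. -/
def zMat (k : ℕ) : Matrix (Fin k) (Fin k) ℂ :=
  NormedSpace.exp ((((2 * Real.pi : ℝ) : ℂ) * Complex.I) • yMat k)

/-- Lipschitz bound for the circle exponential. -/
lemma exp_I_dist (a b : ℝ) :
    ‖Complex.exp (a * Complex.I) - Complex.exp (b * Complex.I)‖ ≤ |a - b| := by
  have h := (lipschitzWith_circleMap (0:ℂ) 1).dist_le_mul a b
  simpa [circleMap, Complex.dist_eq, Real.dist_eq] using h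

lemma hsNorm_trace_eq (k : ℕ) (A : Matrix (Fin k) (Fin k) ℂ) :
    ((Aᴴ * A).trace).re = ∑ j, ∑ i, ‖A i j‖ ^ 2 := by
  have : (Aᴴ * A).trace = ∑ j, ∑ i, (starRingEnd ℂ) (A i j) * A i j := by
    simp [Matrix.trace, Matrix.mul_apply, Matrix.conjTranspose_apply, Matrix.diag]
  rw [this, Complex.re_sum]
  congr 1; ext j
  rw [Complex.re_sum]
  congr 1; ext i
  rw [mul_comm, Complex.mul_conj']
  norm_cast

lemma zMat_eq (k : ℕ) : zMat k =
    Matrix.diagonal fun i : Fin k =>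
      Complex.exp ((((2 * Real.pi : ℝ) : ℂ) * Complex.I) * (((i : ℕ) : ℂ) / k)) := by
  rw [zMat, yMat, ← Matrix.diagonal_smul, Matrix.exp_diagonal]
  ext i j
  rw [Pi.exp_def]
  simp [Complex.exp_eq_exp_ℂ, smul_eq_mul, Matrix.diagonal]

/-- The intertwining inclusion `𝓘(y_k, y_k, ε²) ⊆ Σ(z_k, z_k, 7ε²)`: a unitary almost
commuting with `y_k` almost commutes with `z_k`. -/
theorem intertwining_subset
    (k : ℕ) (hk : 1 ≤ k) (ε : ℝ) (hε : 0 < ε)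
    (u : Matrix (Fin k) (Fin k) ℂ) (hu : u ∈ Matrix.unitaryGroup (Fin k) ℂ)
    (hcomm : hsNorm k (u * yMat k - yMat k * u) < ε ^ 2) :
    matOpNorm u ≤ 2 ∧ hsNorm k (u * zMat k - zMat k * u) < 7 * ε ^ 2 := by
  constructor
  · -- operator norm: a unitary has norm 1
    have h1 : Matrix.toEuclideanCLM (𝕜 := ℂ) u ∈
        unitary (EuclideanSpace ℂ (Fin k) →L[ℂ] EuclideanSpace ℂ (Fin k)) := by
      constructor
      · rw [← map_star, ← _root_.map_mul, hu.1, _root_.map_one]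
      · rw [← map_star, ← _root_.map_mul, hu.2, _root_.map_one]
    haveI : Nonempty (Fin k) := Fin.pos_iff_nonempty.mp hk
    obtain ⟨x, hx⟩ := exists_ne (0 : EuclideanSpace ℂ (Fin k))
    haveI : Nontrivial (EuclideanSpace ℂ (Fin k) →L[ℂ] EuclideanSpace ℂ (Fin k)) :=
      ⟨1, 0, fun h => hx (by simpa using congrFun (congrArg DFunLike.coe h) x)⟩
    rw [matOpNorm, CStarRing.norm_of_mem_unitary h1]
    norm_num
  · -- HS norm bound
    set A := u * yMat k - yMat k * u with hA
    set B := u * zMat k - zMat k * u with hB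
    have hπ : (0:ℝ) < 2 * Real.pi := by positivity
    have key : ∀ i j, ‖B i j‖ ≤ (2 * Real.pi) * ‖A i j‖ := by
      intro i j
      have hAij : A i j = u i j * ((((j:ℕ):ℂ)/k) - (((i:ℕ):ℂ)/k)) := by
        simp only [hA, Matrix.sub_apply, yMat, Matrix.mul_diagonal, Matrix.diagonal_mul]
        ring
      have hBij : B i j = u i j *
          (Complex.exp ((((2 * Real.pi : ℝ) : ℂ) * Complex.I) * (((j:ℕ):ℂ)/k))
            - Complex.exp ((((2 * Real.pi : ℝ) : ℂ) * Complex.I) * (((i:ℕ):ℂ)/k))) := by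
        rw [hB, zMat_eq]
        simp only [Matrix.sub_apply, Matrix.mul_diagonal, Matrix.diagonal_mul]
        ring
      have hcj : (((2 * Real.pi : ℝ) : ℂ) * Complex.I) * (((j:ℕ):ℂ)/k)
          = ((2 * Real.pi * ((j:ℕ)/k : ℝ) : ℝ) : ℂ) * Complex.I := by push_cast; ring
      have hci : (((2 * Real.pi : ℝ) : ℂ) * Complex.I) * (((i:ℕ):ℂ)/k)
          = ((2 * Real.pi * ((i:ℕ)/k : ℝ) : ℝ) : ℂ) * Complex.I := by push_cast; ring
      have hexp : ‖
          (Complex.exp ((((2 * Real.pi : ℝ) : ℂ) * Complex.I) * (((j:ℕ):ℂ)/k))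
            - Complex.exp ((((2 * Real.pi : ℝ) : ℂ) * Complex.I) * (((i:ℕ):ℂ)/k)))‖
          ≤ (2 * Real.pi) * ‖(((j:ℕ):ℂ)/k) - (((i:ℕ):ℂ)/k)‖ := by
        rw [hcj, hci]
        refine le_trans (exp_I_dist _ _) ?_
        have h1 : (2 * Real.pi * ((j:ℕ)/k : ℝ) - 2 * Real.pi * ((i:ℕ)/k : ℝ))
            = 2 * Real.pi * (((j:ℕ)/k : ℝ) - ((i:ℕ)/k : ℝ)) := by ring
        have h2 : ((((j:ℕ):ℂ)/k) - (((i:ℕ):ℂ)/k))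
            = (((((j:ℕ)/k : ℝ) - ((i:ℕ)/k : ℝ)) : ℝ) : ℂ) := by push_cast; ring
        rw [h1, abs_mul, abs_of_pos hπ, h2, Complex.norm_real, Real.norm_eq_abs]
      rw [hBij, hAij, norm_mul, norm_mul]
      calc ‖u i j‖ * ‖
              (Complex.exp ((((2 * Real.pi : ℝ) : ℂ) * Complex.I) * (((j:ℕ):ℂ)/k))
                - Complex.exp ((((2 * Real.pi : ℝ) : ℂ) * Complex.I) * (((i:ℕ):ℂ)/k)))‖
          ≤ ‖u i j‖ * ((2 * Real.pi) * ‖(((j:ℕ):ℂ)/k) - (((i:ℕ):ℂ)/k)‖) :=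
            mul_le_mul_of_nonneg_left hexp (norm_nonneg _)
        _ = (2 * Real.pi) * (‖u i j‖ * ‖(((j:ℕ):ℂ)/k) - (((i:ℕ):ℂ)/k)‖) := by ring
    have hsum : (∑ j, ∑ i, ‖B i j‖ ^ 2)
        ≤ (2 * Real.pi) ^ 2 * ∑ j, ∑ i, ‖A i j‖ ^ 2 := by
      rw [Finset.mul_sum]
      refine Finset.sum_le_sum fun j _ => ?_
      rw [Finset.mul_sum]
      refine Finset.sum_le_sum fun i _ => ?_
      calc ‖B i j‖ ^ 2 ≤ ((2 * Real.pi) * ‖A i j‖) ^ 2 :=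
            pow_le_pow_left₀ (norm_nonneg _) (key i j) 2
        _ = (2 * Real.pi) ^ 2 * ‖A i j‖ ^ 2 := by ring
    have hk' : (0:ℝ) < k := by exact_mod_cast hk
    have hfin : hsNorm k B ≤ (2 * Real.pi) * hsNorm k A := by
      rw [hsNorm, hsNorm, hsNorm_trace_eq, hsNorm_trace_eq,
        show (2 * Real.pi) * Real.sqrt ((∑ j, ∑ i, ‖A i j‖ ^ 2) / k)
          = Real.sqrt ((2 * Real.pi) ^ 2 * ((∑ j, ∑ i, ‖A i j‖ ^ 2) / k)) by
          rw [Real.sqrt_mul (sq_nonneg _), Real.sqrt_sq hπ.le]]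
      apply Real.sqrt_le_sqrt
      rw [← mul_div_assoc]
      gcongr
    have h2 : (2 * Real.pi) * hsNorm k A < (2 * Real.pi) * ε ^ 2 :=
      mul_lt_mul_of_pos_left hcomm hπ
    have h3 : (2 * Real.pi) * ε ^ 2 ≤ 7 * ε ^ 2 := by
      nlinarith [Real.pi_lt_d2, sq_nonneg ε, hε]
    linarith
end
end
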